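/- The one-dimensional sand automaton N of radius 1 with local rule f_N(a,b) = −1 if a < 0 or b < 0, and f_N(a,b) = 0 otherwise (where (a,b) is the range of a pile), is nilpotent: for every bounded configuration x ∈ B, taking c = min_(j∈ℤ) x_j, one has lim_(n→∞) d(F_N^n(x), c̄) = 0. -/

import Mathlib

open Filter

/-- The set `Z̃ = ℤ ∪ {−∞, +∞}` of extended integers. -/
abbrev Ztilde := WithBot (WithTop ℤ)

/-- Embedding of `ℤ` into `Z̃`. -/
def Ztilde.ofInt (z : ℤ) : Ztilde := ((z : WithTop ℤ) : WithBot (WithTop ℤ))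

/-- The underlying integer of a finite extended integer (0 on `±∞`). -/
def Ztilde.toInt (n : Ztilde) : ℤ := (n.unbotD 0).untopD 0

/-- The one-dimensional sand-automata configuration space `C = Z̃^ℤ`. -/
abbrev Conf1 := ℤ → Ztilde

/-- `ζ : C → {0,1}^(ℤ²)`, `ζ(x)_(i,k) = 1` iff `x_i ≥ k`. -/
noncomputable def zeta1 (x : Conf1) : ℤ × ℤ → Bool :=
  fun j => decide (Ztilde.ofInt j.2 ≤ x j.1)

open scoped Classical in
/-- The distance `d(x,y) = 2^(−min{|j|_∞ : ζ(x)_j ≠ ζ(y)_j})`, `0` if `x = y`. -/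
noncomputable def saDist1 (x y : Conf1) : ℝ :=
  if x = y then 0
  else (2 : ℝ) ^
    (-((sInf {n : ℕ | ∃ j : ℤ × ℤ, max j.1.natAbs j.2.natAbs = n ∧
        zeta1 x j ≠ zeta1 y j} : ℕ) : ℤ))

/-- The measuring device `β_r^m`. -/
noncomputable def beta (r : ℕ) (m : ℤ) (n : Ztilde) : Ztilde :=
  if Ztilde.ofInt (m + r) < n then ⊤
  else if n < Ztilde.ofInt (m - r) then ⊥
  else Ztilde.ofInt (n.toInt - m)

/-- A configuration is bounded: all its piles lie between two integers. -/
def Bounded (x : Conf1) : Prop :=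
  ∃ m1 m2 : ℤ, ∀ i : ℤ, Ztilde.ofInt m1 ≤ x i ∧ x i ≤ Ztilde.ofInt m2

/-- The global rule `F_N` of the sand automaton `N` of radius `1` with local rule
`f_N(a,b) = −1` if `a < 0` or `b < 0`, and `0` otherwise, where
`(a,b) = (β_1^(x_i)(x_(i−1)), β_1^(x_i)(x_(i+1)))` is the range at `i`. -/
noncomputable def FN (x : Conf1) : Conf1 := fun i =>
  if x i = ⊤ ∨ x i = ⊥ then x i
  else if beta 1 (x i).toInt (x (i - 1)) < Ztilde.ofInt 0 ∨
          beta 1 (x i).toInt (x (i + 1)) < Ztilde.ofInt 0 then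
    Ztilde.ofInt ((x i).toInt - 1)
  else x i

lemma ofInt_lt_ofInt {a b : ℤ} : Ztilde.ofInt a < Ztilde.ofInt b ↔ a < b := by
  simp [Ztilde.ofInt]
lemma ofInt_le_ofInt {a b : ℤ} : Ztilde.ofInt a ≤ Ztilde.ofInt b ↔ a ≤ b := by
  simp [Ztilde.ofInt]
lemma ofInt_inj {a b : ℤ} : Ztilde.ofInt a = Ztilde.ofInt b ↔ a = b := by
  simp [Ztilde.ofInt]
lemma exists_ofInt {n : Ztilde} (h1 : n ≠ ⊥) (h2 : n ≠ ⊤) : ∃ z : ℤ, n = Ztilde.ofInt z := by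
  rcases n with _ | n
  · exact absurd rfl h1
  rcases n with _ | z
  · exact absurd rfl h2
  · exact ⟨z, rfl⟩
lemma toInt_ofInt (a : ℤ) : (Ztilde.ofInt a).toInt = a := by
  simp [Ztilde.ofInt, Ztilde.toInt]
lemma ofInt_ne_top (a : ℤ) : Ztilde.ofInt a ≠ ⊤ := by simp [Ztilde.ofInt]
lemma ofInt_ne_bot (a : ℤ) : Ztilde.ofInt a ≠ ⊥ := by simp [Ztilde.ofInt]

lemma beta_one_lt_zero {z w : ℤ} :
    beta 1 z (Ztilde.ofInt w) < Ztilde.ofInt 0 ↔ w < z := by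
  unfold beta
  rcases lt_trichotomy w (z - 1) with h | h | h
  · rw [if_neg (by rw [ofInt_lt_ofInt]; push_cast; omega),
        if_pos (by rw [ofInt_lt_ofInt]; push_cast; omega)]
    exact iff_of_true (bot_lt_iff_ne_bot.mpr (ofInt_ne_bot 0)) (by omega)
  · rw [if_neg (by rw [ofInt_lt_ofInt]; push_cast; omega),
      if_neg (by rw [ofInt_lt_ofInt]; push_cast; omega), toInt_ofInt, ofInt_lt_ofInt]
    omega
  · by_cases h2 : z + 1 < w
    · rw [if_pos (by rw [ofInt_lt_ofInt]; push_cast; omega)]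
      exact iff_of_false not_top_lt (by omega)
    · rw [if_neg (by rw [ofInt_lt_ofInt]; push_cast; omega),
        if_neg (by rw [ofInt_lt_ofInt]; push_cast; omega), toInt_ofInt, ofInt_lt_ofInt]
      omega

def allGe (c : ℤ) (u : Conf1) : Prop := ∀ i, ∃ z : ℤ, c ≤ z ∧ u i = Ztilde.ofInt z

lemma FN_apply {c : ℤ} {u : Conf1} (hu : allGe c u) (i : ℤ) {z : ℤ}
    (hz : u i = Ztilde.ofInt z) :
    FN u i = if u (i-1) < u i ∨ u (i+1) < u i then Ztilde.ofInt (z - 1)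
      else Ztilde.ofInt z := by
  obtain ⟨w1, hw1c, hw1⟩ := hu (i-1)
  obtain ⟨w2, hw2c, hw2⟩ := hu (i+1)
  unfold FN
  rw [if_neg (by rw [hz]; push_neg; exact ⟨ofInt_ne_top z, ofInt_ne_bot z⟩)]
  rw [hz, hw1, hw2, toInt_ofInt]
  simp only [beta_one_lt_zero, ofInt_lt_ofInt]

lemma allGe_FN {c : ℤ} {u : Conf1} (hu : allGe c u) : allGe c (FN u) := by
  intro i
  obtain ⟨z, hzc, hz⟩ := hu i
  rw [FN_apply hu i hz]
  split_ifs with h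
  · refine ⟨z - 1, ?_, rfl⟩
    rcases h with h | h
    · obtain ⟨w, hwc, hw⟩ := hu (i-1)
      rw [hw, hz, ofInt_lt_ofInt] at h; omega
    · obtain ⟨w, hwc, hw⟩ := hu (i+1)
      rw [hw, hz, ofInt_lt_ofInt] at h; omega
  · exact ⟨z, hzc, rfl⟩

lemma allGe_iter {c : ℤ} {x : Conf1} (hx : allGe c x) (n : ℕ) : allGe c (FN^[n] x) := by
  induction n with
  | zero => exact hx
  | succ n ih => rw [Function.iterate_succ_apply']; exact allGe_FN ih

-- once at c, stays at c
lemma stay {c : ℤ} {x : Conf1} (hx : allGe c x) {n : ℕ} {i : ℤ}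
    (h : FN^[n] x i = Ztilde.ofInt c) : ∀ m, n ≤ m → FN^[m] x i = Ztilde.ofInt c := by
  intro m hm
  obtain ⟨k, rfl⟩ := Nat.exists_eq_add_of_le hm
  clear hm
  induction k with
  | zero => exact h
  | succ k ih =>
    have hall := allGe_iter hx (n + k)
    rw [← Nat.add_assoc, Function.iterate_succ_apply', FN_apply hall i ih]
    rw [if_neg]
    push_neg
    obtain ⟨w1, hw1c, hw1⟩ := hall (i-1)
    obtain ⟨w2, hw2c, hw2⟩ := hall (i+1)
    rw [ih, hw1, hw2]
    constructor <;> rw [ofInt_le_ofInt] <;> omega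

-- a pile with a neighbor at c decreases if above c
lemma dec {c : ℤ} {x : Conf1} (hx : allGe c x) {n : ℕ} {j z : ℤ}
    (hz : FN^[n] x j = Ztilde.ofInt z) (h : c < z)
    (hnb : FN^[n] x (j-1) = Ztilde.ofInt c ∨ FN^[n] x (j+1) = Ztilde.ofInt c) :
    FN^[n+1] x j = Ztilde.ofInt (z-1) := by
  have hall := allGe_iter hx n
  rw [Function.iterate_succ_apply', FN_apply hall j hz, if_pos]
  rcases hnb with hnb | hnb
  · exact Or.inl (by rw [hnb, hz, ofInt_lt_ofInt]; omega)
  · exact Or.inr (by rw [hnb, hz, ofInt_lt_ofInt]; omega)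

-- if a neighbor of j is permanently c from time n on, then j eventually is permanently c
lemma reach {c : ℤ} {x : Conf1} (hx : allGe c x) {n : ℕ} {j : ℤ}
    (hnb : ∀ m, n ≤ m → FN^[m] x (j-1) = Ztilde.ofInt c ∨ FN^[m] x (j+1) = Ztilde.ofInt c) :
    ∃ N, ∀ m, N ≤ m → FN^[m] x j = Ztilde.ofInt c := by
  obtain ⟨z, hzc, hz⟩ := allGe_iter hx n j
  -- after k steps the value is at most max c (z - k)
  have key : ∀ k : ℕ, ∃ w : ℤ, c ≤ w ∧ w ≤ max c (z - k) ∧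
      FN^[n+k] x j = Ztilde.ofInt w := by
    intro k
    induction k with
    | zero => exact ⟨z, hzc, by simpa using le_max_right c z, hz⟩
    | succ k ih =>
      obtain ⟨w, hwc, hwm, hw⟩ := ih
      rcases eq_or_lt_of_le hwc with heq | hlt
      · obtain rfl := heq.symm
        exact ⟨w, le_rfl, le_max_left _ _,
          by rw [← Nat.add_assoc]; exact stay hx hw (n + k + 1) (by omega)⟩
      · refine ⟨w - 1, by omega, ?_, ?_⟩
        · refine le_max_iff.mpr ?_
          rcases le_max_iff.mp hwm with h | h
          · exact Or.inl (by omega)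
          · exact Or.inr (by push_cast at h ⊢; omega)
        · rw [← Nat.add_assoc]
          exact dec hx hw hlt (hnb (n+k) (by omega))
  obtain ⟨w, hwc, hwm, hw⟩ := key (z - c).toNat
  have : w = c := by
    have := le_max_iff.mp hwm
    omega
  exact ⟨n + (z - c).toNat, stay hx (this ▸ hw)⟩

lemma eventually_c {c : ℤ} {x : Conf1} (hx : allGe c x) {j0 : ℤ}
    (hj0 : x j0 = Ztilde.ofInt c) (i : ℤ) :
    ∃ N, ∀ m, N ≤ m → FN^[m] x i = Ztilde.ofInt c := by
  have base : ∀ m, 0 ≤ m → FN^[m] x j0 = Ztilde.ofInt c :=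
    stay hx (n := 0) (by simpa using hj0)
  have right : ∀ k : ℕ, ∃ N, ∀ m, N ≤ m → FN^[m] x (j0 + k) = Ztilde.ofInt c := by
    intro k
    induction k with
    | zero => exact ⟨0, by simpa using base⟩
    | succ k ih =>
      obtain ⟨N, hN⟩ := ih
      refine reach hx (n := N) (j := j0 + ((k:ℤ)+1)) (fun m hm => Or.inl ?_)
        |>.imp (fun N' hN' m hm => ?_)
      · have e : (j0 + ((k:ℤ)+1)) - 1 = j0 + (k:ℤ) := by ring
        rw [e]; exact hN m hm
      · have e : j0 + ((k:ℤ)+1) = j0 + ((k+1 : ℕ) : ℤ) := by push_cast; ring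
        rw [← e]; exact hN' m hm
  have left : ∀ k : ℕ, ∃ N, ∀ m, N ≤ m → FN^[m] x (j0 - k) = Ztilde.ofInt c := by
    intro k
    induction k with
    | zero => exact ⟨0, by simpa using base⟩
    | succ k ih =>
      obtain ⟨N, hN⟩ := ih
      refine reach hx (n := N) (j := j0 - ((k:ℤ)+1)) (fun m hm => Or.inr ?_)
        |>.imp (fun N' hN' m hm => ?_)
      · have e : (j0 - ((k:ℤ)+1)) + 1 = j0 - (k:ℤ) := by ring
        rw [e]; exact hN m hm
      · have e : j0 - ((k:ℤ)+1) = j0 - ((k+1 : ℕ) : ℤ) := by push_cast; ring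
        rw [← e]; exact hN' m hm
  rcases le_total j0 i with h | h
  · obtain ⟨N, hN⟩ := right (i - j0).toNat
    exact ⟨N, fun m hm => by
      have e : j0 + ((i - j0).toNat : ℤ) = i := by omega
      rw [← e]; exact hN m hm⟩
  · obtain ⟨N, hN⟩ := left (j0 - i).toNat
    exact ⟨N, fun m hm => by
      have e : j0 - ((j0 - i).toNat : ℤ) = i := by omega
      rw [← e]; exact hN m hm⟩

lemma window {c : ℤ} {x : Conf1} (hx : allGe c x) {j0 : ℤ}
    (hj0 : x j0 = Ztilde.ofInt c) (M : ℕ) :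
    ∃ N, ∀ m, N ≤ m → ∀ i : ℤ, i.natAbs ≤ M → FN^[m] x i = Ztilde.ofInt c := by
  choose N hN using eventually_c hx hj0
  refine ⟨(Finset.Icc (-(M:ℤ)) M).sup N, fun m hm i hi => hN i m (le_trans ?_ hm)⟩
  exact Finset.le_sup (by simp [Finset.mem_Icc]; omega)

/-- The sand automaton `N` is nilpotent: for every bounded
configuration `x`, taking `c = min_j x_j`, the iterates of `x` converge to the
constant configuration `c̄`. -/
theorem N_nilpotent (x : Conf1) (hx : Bounded x) (c : ℤ)
    (hc_mem : ∃ j : ℤ, x j = Ztilde.ofInt c)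
    (hc_min : ∀ j : ℤ, Ztilde.ofInt c ≤ x j) :
    Filter.Tendsto (fun n : ℕ => saDist1 (FN^[n] x) (fun _ => Ztilde.ofInt c))
      Filter.atTop (nhds 0) := by
  classical
  obtain ⟨m1, m2, hb⟩ := hx
  have hallx : allGe c x := by
    intro i
    have h1 : x i ≠ ⊥ := fun h => ofInt_ne_bot c (le_bot_iff.mp (h ▸ hc_min i))
    have h2 : x i ≠ ⊤ := fun h => ofInt_ne_top m2 (top_le_iff.mp (h ▸ (hb i).2))
    obtain ⟨z, hz⟩ := exists_ofInt h1 h2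
    exact ⟨z, ofInt_le_ofInt.mp (hz ▸ hc_min i), hz⟩
  obtain ⟨j0, hj0⟩ := hc_mem
  rw [Metric.tendsto_atTop]
  intro ε hε
  obtain ⟨M, hM⟩ := exists_pow_lt_of_lt_one hε (by norm_num : (1:ℝ)/2 < 1)
  obtain ⟨N, hN⟩ := window hallx hj0 M
  refine ⟨N, fun n hn => ?_⟩
  have hnonneg : ∀ a b : Conf1, 0 ≤ saDist1 a b := by
    intro a b
    unfold saDist1
    split_ifs
    · exact le_rfl
    · positivity
  rw [Real.dist_eq, sub_zero, abs_of_nonneg (hnonneg _ _)]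
  by_cases hEq : FN^[n] x = fun _ => Ztilde.ofInt c
  · rw [saDist1, if_pos hEq]; exact hε
  · rw [saDist1, if_neg hEq]
    set S := {k : ℕ | ∃ j : ℤ × ℤ, max j.1.natAbs j.2.natAbs = k ∧
        zeta1 (FN^[n] x) j ≠ zeta1 (fun _ => Ztilde.ofInt c) j} with hS
    have hSne : S.Nonempty := by
      obtain ⟨i, hi⟩ := Function.ne_iff.mp hEq
      obtain ⟨z, hzc, hz⟩ := allGe_iter hallx n i
      have hzc' : c < z := lt_of_le_of_ne hzc (fun h => hi (by rw [hz, ← h]))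
      refine ⟨max i.natAbs z.natAbs, ⟨(i, z), rfl, ?_⟩⟩
      simp only [zeta1, hz, ofInt_le_ofInt]
      simp [hzc', not_le.mpr hzc']
    have hSbd : ∀ b ∈ S, M + 1 ≤ b := by
      rintro b ⟨⟨j1, j2⟩, rfl, hne⟩
      by_contra hb2
      have hj1 : j1.natAbs ≤ M := by omega
      exact hne (by simp only [zeta1, hN n hn j1 hj1])
    have hMle : (M : ℤ) ≤ ((sInf S : ℕ) : ℤ) := by
      have := le_csInf hSne hSbd
      exact_mod_cast Nat.le_of_succ_le this
    calc (2:ℝ) ^ (-((sInf S : ℕ) : ℤ)) ≤ (2:ℝ) ^ (-(M:ℤ)) := by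
          apply zpow_le_zpow_right₀ one_le_two; omega
      _ = ((1:ℝ)/2) ^ M := by
          rw [one_div, inv_pow, ← zpow_natCast, ← zpow_neg]
      _ < ε := hM
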